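/- Reduction correctness (forward direction): given a subset sum instance (a_1,...,a_n; B) with a subset A' summing to B, the set U = {v : a_v in A'} satisfies min( sum_{v in U} 2 a_v, 2B ) > sum_{p in N(U)} bbar_p, where N(U) consists of the private practices of origins in U (capacity a_v each) together with the shared practice of capacity B-1. -/

import Mathlib

open Finset

/-- Reduction correctness, forward direction: if `A'` sums to
`B`, then `U = A'` violates the separation inequality, i.e.
`min (∑_{v ∈ U} 2 a v) (2B) > ∑_{p ∈ N(U)} b̄_p`. -/
theorem stmt_14 (n : ℕ) (a : Fin n → ℕ) (B : ℕ) (hB : 1 ≤ B)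
    (A' : Finset (Fin n)) (hA : ∑ v ∈ A', a v = B) :
    (∑ p ∈ A'.biUnion (fun v => ({Sum.inl v, Sum.inr ()} : Finset (Fin n ⊕ Unit))),
        Sum.elim a (fun _ => B - 1) p) <
      min (∑ v ∈ A', 2 * a v) (2 * B) := by
  have hne : A'.Nonempty := by
    rcases A'.eq_empty_or_nonempty with h | h
    · subst h; simp at hA; omega
    · exact h
  have hset : A'.biUnion (fun v => ({Sum.inl v, Sum.inr ()} : Finset (Fin n ⊕ Unit)))
      = A'.image Sum.inl ∪ {Sum.inr ()} := by
    ext p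
    cases p <;> simp [hne]
    · exact hne
  have h2 : ∑ v ∈ A', 2 * a v = 2 * B := by
    rw [← Finset.mul_sum, hA]
  rw [hset, sum_union (by simp), sum_image (by simp), h2]
  simp [hA]
  omega
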